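/- Let D be a finite 2-semilattice and let I be a nonempty standard (2,3)-instance over D with variable set X, potatoes (P_x) and relations (R_{xy}). For each x let P'_x = {a ∈ P_x : a is reachable from every element of P_x within the digraph on P_x}, and for each (x,y) let R'_{xy} = {p ∈ R_{xy} : p is reachable from every element of R_{xy} within the digraph on R_{xy} under the coordinatewise operation}. Then every P'_x and every R'_{xy} is nonempty, R'_{xy} ⊆ P'_x × P'_y for all x, y, and the primed data (X, (P'_x), (R'_{xy})) again satisfies (P1) and (P2); hence it is a nonempty standard (2,3)-instance over D. -/

import Mathlib

/-- Reachability within a subset `S` via the 2-semilattice digraph `a → b ↔ a * b = b`: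
a directed walk from `a` to `b` all of whose vertices lie in `S`. -/
def ReachIn {D : Type*} [Mul D] (S : Set D) (a b : D) : Prop :=
  Relation.ReflTransGen (fun x y => x ∈ S ∧ y ∈ S ∧ x * y = y) a b

/-- A standard (2,3)-instance over a set `D` with a binary operation, with variable set `X`. -/
structure StdInstance (D : Type*) [Mul D] (X : Type*) where
  P : X → Set D
  R : X → X → Set (D × D)
  P_closed : ∀ x, ∀ a ∈ P x, ∀ b ∈ P x, a * b ∈ P x
  R_sub : ∀ x y, R x y ⊆ (P x) ×ˢ (P y)
  R_closed : ∀ x y, ∀ p ∈ R x y, ∀ q ∈ R x y, p * q ∈ R x y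
  P1 : ∀ x, R x x = {p : D × D | p.1 ∈ P x ∧ p.1 = p.2}
  P2 : ∀ x y z, ∀ p ∈ R x y, ∃ c ∈ P z, (p.1, c) ∈ R x z ∧ (p.2, c) ∈ R y z
  P3 : ∀ x y, (P x).Nonempty → (P y).Nonempty →
      (∀ a ∈ P x, ∃ b ∈ P y, (a, b) ∈ R x y) ∧ (∀ b ∈ P y, ∃ a ∈ P x, (a, b) ∈ R x y)
  P4 : ∀ x y, R y x = {p : D × D | (p.2, p.1) ∈ R x y}

section Aux
variable {M : Type*} [Mul M] {N : Type*} [Mul N]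

def TopOf (S : Set M) : Set M := {a ∈ S | ∀ b ∈ S, ReachIn S b a}

lemma reachIn_mem_right {S : Set M} {a b : M} (ha : a ∈ S) (h : ReachIn S a b) : b ∈ S := by
  induction h with
  | refl => exact ha
  | tail _ hstep _ => exact hstep.2.1

lemma reach_step (habs : ∀ x y : M, x * (x * y) = x * y) {S : Set M}
    (hcl : ∀ a ∈ S, ∀ b ∈ S, a * b ∈ S) {a b : M} (ha : a ∈ S) (hb : b ∈ S) :
    ReachIn S a (a * b) :=
  Relation.ReflTransGen.single ⟨ha, hcl a ha b hb, habs a b⟩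

lemma topOf_forward {S : Set M} {a b : M} (ha : a ∈ TopOf S) (h : ReachIn S a b) :
    b ∈ TopOf S :=
  ⟨reachIn_mem_right ha.1 h, fun c hc => (ha.2 c hc).trans h⟩

lemma topOf_mul (habs : ∀ x y : M, x * (x * y) = x * y) {S : Set M}
    (hcl : ∀ a ∈ S, ∀ b ∈ S, a * b ∈ S) {a b : M}
    (ha : a ∈ TopOf S) (hb : b ∈ TopOf S) : a * b ∈ TopOf S :=
  topOf_forward ha (reach_step habs hcl ha.1 hb.1)

lemma topOf_nonempty [Finite M] (hcomm : ∀ x y : M, x * y = y * x)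
    (habs : ∀ x y : M, x * (x * y) = x * y) {S : Set M}
    (hcl : ∀ a ∈ S, ∀ b ∈ S, a * b ∈ S) (hne : S.Nonempty) : (TopOf S).Nonempty := by
  obtain ⟨a, ha, hall⟩ : ∃ a ∈ S, ∀ b ∈ S, ReachIn S b a := by
    refine Set.Finite.induction_on_subset (motive := fun F _ => ∃ a ∈ S, ∀ b ∈ F, ReachIn S b a)
      S (Set.toFinite S) ?_ ?_
    · obtain ⟨a, ha⟩ := hne; exact ⟨a, ha, by simp⟩
    · rintro x F hxS - - ⟨a, ha, hall⟩
      refine ⟨a * x, hcl a ha x hxS, ?_⟩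
      intro b hb
      rcases hb with rfl | hb
      · exact hcomm b a ▸ reach_step habs hcl hxS ha
      · exact (hall b hb).trans (reach_step habs hcl ha hxS)
  exact ⟨a, ha, hall⟩

variable {f : M → N}

lemma reachIn_map (hf : ∀ a b, f (a * b) = f a * f b) {S : Set M} {a b : M}
    (h : ReachIn S a b) : ReachIn (f '' S) (f a) (f b) := by
  induction h with
  | refl => exact .refl
  | tail _ hstep ih =>
      exact ih.tail ⟨⟨_, hstep.1, rfl⟩, ⟨_, hstep.2.1, rfl⟩, by rw [← hf, hstep.2.2]⟩

lemma reachIn_lift (habs : ∀ x y : M, x * (x * y) = x * y)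
    (hf : ∀ a b, f (a * b) = f a * f b) {S : Set M}
    (hcl : ∀ a ∈ S, ∀ b ∈ S, a * b ∈ S) {t u : N}
    (h : ReachIn (f '' S) u t) : ∀ a ∈ S, f a = u → ∃ b ∈ S, ReachIn S a b ∧ f b = t := by
  induction h using Relation.ReflTransGen.head_induction_on with
  | refl => exact fun a ha hfa => ⟨a, ha, .refl, hfa⟩
  | head hstep _ ih =>
      intro a ha hfa
      obtain ⟨s', hs', hfs'⟩ := hstep.2.1
      obtain ⟨b, hb, hr, hfb⟩ := ih (a * s') (hcl a ha s' hs')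
        (by rw [hf, hfs', hfa, hstep.2.2])
      exact ⟨b, hb, .head ⟨ha, hcl a ha s' hs', habs a s'⟩ hr, hfb⟩

lemma topOf_image [Finite M] (hcomm : ∀ x y : M, x * y = y * x)
    (habs : ∀ x y : M, x * (x * y) = x * y)
    (hf : ∀ a b, f (a * b) = f a * f b) {S : Set M}
    (hcl : ∀ a ∈ S, ∀ b ∈ S, a * b ∈ S) (hne : S.Nonempty) :
    TopOf (f '' S) = f '' TopOf S := by
  apply Set.Subset.antisymm
  · intro t ht
    obtain ⟨a0, ha0⟩ := topOf_nonempty hcomm habs hcl hne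
    have h1 : ReachIn (f '' S) (f a0) t := ht.2 (f a0) ⟨a0, ha0.1, rfl⟩
    obtain ⟨b, hb, hr, hfb⟩ := reachIn_lift habs hf hcl h1 a0 ha0.1 rfl
    exact ⟨b, topOf_forward ha0 hr, hfb⟩
  · rintro _ ⟨a, ha, rfl⟩
    refine ⟨⟨a, ha.1, rfl⟩, ?_⟩
    rintro _ ⟨s, hs, rfl⟩
    exact reachIn_map hf (ha.2 s hs)

end Aux


theorem stmt8 {D : Type*} [Mul D] [Finite D]
    (hidem : ∀ x : D, x * x = x)
    (hcomm : ∀ x y : D, x * y = y * x)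
    (habs : ∀ x y : D, x * (x * y) = x * y)
    {X : Type*} [Finite X] (I : StdInstance D X)
    (hne : ∀ x, (I.P x).Nonempty) :
    let P' : X → Set D := fun x => {a ∈ I.P x | ∀ b ∈ I.P x, ReachIn (I.P x) b a}
    let R' : X → X → Set (D × D) :=
      fun x y => {p ∈ I.R x y | ∀ q ∈ I.R x y, ReachIn (I.R x y) q p}
    (∀ x, (P' x).Nonempty) ∧ (∀ x y, (R' x y).Nonempty) ∧
      (∀ x y, R' x y ⊆ (P' x) ×ˢ (P' y)) ∧
      ∃ J : StdInstance D X, J.P = P' ∧ J.R = R' := by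
  intro P' R'
  have habs2 : ∀ p q : D × D, p * (p * q) = p * q := fun p q => Prod.ext (habs _ _) (habs _ _)
  have hcomm2 : ∀ p q : D × D, p * q = q * p := fun p q => Prod.ext (hcomm _ _) (hcomm _ _)
  have habs3 : ∀ p q : (D × D) × D, p * (p * q) = p * q :=
    fun p q => Prod.ext (habs2 _ _) (habs _ _)
  have hcomm3 : ∀ p q : (D × D) × D, p * q = q * p :=
    fun p q => Prod.ext (hcomm2 _ _) (hcomm _ _)
  have hRne : ∀ x y, (I.R x y).Nonempty := by
    intro x y
    obtain ⟨a, ha⟩ := hne x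
    obtain ⟨b, hb, hab⟩ := (I.P3 x y (hne x) (hne y)).1 a ha
    exact ⟨(a, b), hab⟩
  have hfst_img : ∀ x y, Prod.fst '' I.R x y = I.P x := by
    intro x y
    apply Set.Subset.antisymm
    · rintro _ ⟨p, hp, rfl⟩; exact (I.R_sub x y hp).1
    · intro a ha
      obtain ⟨b, hb, hab⟩ := (I.P3 x y (hne x) (hne y)).1 a ha
      exact ⟨(a, b), hab, rfl⟩
  have hsnd_img : ∀ x y, Prod.snd '' I.R x y = I.P y := by
    intro x y
    apply Set.Subset.antisymm
    · rintro _ ⟨p, hp, rfl⟩; exact (I.R_sub x y hp).2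
    · intro b hb
      obtain ⟨a, ha, hab⟩ := (I.P3 x y (hne x) (hne y)).2 b hb
      exact ⟨(a, b), hab, rfl⟩
  have hTfst : ∀ x y, Prod.fst '' TopOf (I.R x y) = TopOf (I.P x) := by
    intro x y
    rw [← topOf_image hcomm2 habs2 (fun _ _ => rfl) (I.R_closed x y) (hRne x y), hfst_img]
  have hTsnd : ∀ x y, Prod.snd '' TopOf (I.R x y) = TopOf (I.P y) := by
    intro x y
    rw [← topOf_image hcomm2 habs2 (fun _ _ => rfl) (I.R_closed x y) (hRne x y), hsnd_img]
  have hR_sub' : ∀ x y, ∀ p ∈ TopOf (I.R x y), p ∈ TopOf (I.P x) ×ˢ TopOf (I.P y) := by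
    intro x y p hp
    refine ⟨?_, ?_⟩
    · rw [← hTfst x y]; exact ⟨p, hp, rfl⟩
    · rw [← hTsnd x y]; exact ⟨p, hp, rfl⟩
  have hdiag : ∀ x, TopOf (I.R x x) = {p : D × D | p.1 ∈ TopOf (I.P x) ∧ p.1 = p.2} := by
    intro x
    have himg : (fun a : D => (a, a)) '' I.P x = I.R x x := by
      rw [I.P1]
      ext p
      constructor
      · rintro ⟨a, ha, rfl⟩; exact ⟨ha, rfl⟩
      · rintro ⟨h1, h2⟩; exact ⟨p.1, h1, Prod.ext rfl h2⟩
    rw [← himg, topOf_image hcomm habs (fun _ _ => rfl) (I.P_closed x) (hne x)]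
    ext p
    constructor
    · rintro ⟨a, ha, rfl⟩; exact ⟨ha, rfl⟩
    · rintro ⟨h1, h2⟩; exact ⟨p.1, h1, Prod.ext rfl h2⟩
  have hP2' : ∀ x y z, ∀ p ∈ TopOf (I.R x y),
      ∃ c ∈ TopOf (I.P z), (p.1, c) ∈ TopOf (I.R x z) ∧ (p.2, c) ∈ TopOf (I.R y z) := by
    intro x y z p hp
    set W : Set ((D × D) × D) :=
      {w | w.1 ∈ I.R x y ∧ (w.1.1, w.2) ∈ I.R x z ∧ (w.1.2, w.2) ∈ I.R y z} with hWdef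
    have hWcl : ∀ a ∈ W, ∀ b ∈ W, a * b ∈ W := by
      rintro a ⟨h1, h2, h3⟩ b ⟨h1', h2', h3'⟩
      exact ⟨I.R_closed x y _ h1 _ h1', I.R_closed x z _ h2 _ h2', I.R_closed y z _ h3 _ h3'⟩
    have hWne : W.Nonempty := by
      obtain ⟨q, hq⟩ := hRne x y
      obtain ⟨c, hc, h1, h2⟩ := I.P2 x y z q hq
      exact ⟨(q, c), hq, h1, h2⟩
    have hW1 : Prod.fst '' W = I.R x y := by
      apply Set.Subset.antisymm
      · rintro _ ⟨w, hw, rfl⟩; exact hw.1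
      · intro q hq
        obtain ⟨c, hc, h1, h2⟩ := I.P2 x y z q hq
        exact ⟨(q, c), ⟨hq, h1, h2⟩, rfl⟩
    have hW13 : (fun w : (D × D) × D => (w.1.1, w.2)) '' W = I.R x z := by
      apply Set.Subset.antisymm
      · rintro _ ⟨w, hw, rfl⟩; exact hw.2.1
      · intro q hq
        obtain ⟨b, hb, h1, h2⟩ := I.P2 x z y q hq
        rw [I.P4 y z] at h2
        exact ⟨((q.1, b), q.2), ⟨h1, hq, h2⟩, rfl⟩
    have hW23 : (fun w : (D × D) × D => (w.1.2, w.2)) '' W = I.R y z := by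
      apply Set.Subset.antisymm
      · rintro _ ⟨w, hw, rfl⟩; exact hw.2.2
      · intro q hq
        obtain ⟨c, hc, h1, h2⟩ := I.P2 y z x q hq
        rw [I.P4 x y] at h1
        rw [I.P4 x z] at h2
        exact ⟨((c, q.1), q.2), ⟨h1, h2, hq⟩, rfl⟩
    have hT1 : Prod.fst '' TopOf W = TopOf (I.R x y) := by
      rw [← topOf_image hcomm3 habs3 (fun _ _ => rfl) hWcl hWne, hW1]
    have hT13 : (fun w : (D × D) × D => (w.1.1, w.2)) '' TopOf W = TopOf (I.R x z) := by
      rw [← topOf_image hcomm3 habs3 (fun _ _ => rfl) hWcl hWne, hW13]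
    have hT23 : (fun w : (D × D) × D => (w.1.2, w.2)) '' TopOf W = TopOf (I.R y z) := by
      rw [← topOf_image hcomm3 habs3 (fun _ _ => rfl) hWcl hWne, hW23]
    have hpW : p ∈ Prod.fst '' TopOf W := by rw [hT1]; exact hp
    obtain ⟨w, hw, hwp⟩ := hpW
    have h13 : (w.1.1, w.2) ∈ TopOf (I.R x z) := by rw [← hT13]; exact ⟨w, hw, rfl⟩
    have h23 : (w.1.2, w.2) ∈ TopOf (I.R y z) := by rw [← hT23]; exact ⟨w, hw, rfl⟩
    refine ⟨w.2, (hR_sub' x z _ h13).2, ?_, ?_⟩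
    · rw [← hwp]; exact h13
    · rw [← hwp]; exact h23
  have hP3' : ∀ x y, (∀ a ∈ TopOf (I.P x), ∃ b ∈ TopOf (I.P y), (a, b) ∈ TopOf (I.R x y)) ∧
      (∀ b ∈ TopOf (I.P y), ∃ a ∈ TopOf (I.P x), (a, b) ∈ TopOf (I.R x y)) := by
    intro x y
    constructor
    · intro a ha
      have h : a ∈ Prod.fst '' TopOf (I.R x y) := by rw [hTfst]; exact ha
      obtain ⟨q, hq, rfl⟩ := h
      exact ⟨q.2, (hR_sub' x y _ hq).2, hq⟩
    · intro b hb
      have h : b ∈ Prod.snd '' TopOf (I.R x y) := by rw [hTsnd]; exact hb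
      obtain ⟨q, hq, rfl⟩ := h
      exact ⟨q.1, (hR_sub' x y _ hq).1, hq⟩
  have hP4' : ∀ x y, TopOf (I.R y x) = {p : D × D | (p.2, p.1) ∈ TopOf (I.R x y)} := by
    intro x y
    have himg : Prod.swap '' I.R x y = I.R y x := by
      rw [I.P4 x y]
      ext q
      constructor
      · rintro ⟨q', hq', rfl⟩; exact hq'
      · intro hq; exact ⟨(q.2, q.1), hq, rfl⟩
    rw [← himg, topOf_image hcomm2 habs2 (fun _ _ => rfl) (I.R_closed x y) (hRne x y)]
    ext q
    constructor
    · rintro ⟨q', hq', rfl⟩; exact hq'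
    · intro hq; exact ⟨(q.2, q.1), hq, rfl⟩
  refine ⟨fun x => topOf_nonempty hcomm habs (I.P_closed x) (hne x),
    fun x y => topOf_nonempty hcomm2 habs2 (I.R_closed x y) (hRne x y),
    fun x y p hp => hR_sub' x y p hp, ?_⟩
  refine ⟨⟨P', R', ?_, ?_, ?_, ?_, ?_, ?_, ?_⟩, rfl, rfl⟩
  · exact fun x a ha b hb => topOf_mul habs (I.P_closed x) ha hb
  · exact fun x y p hp => hR_sub' x y p hp
  · exact fun x y p hp q hq => topOf_mul habs2 (I.R_closed x y) hp hq
  · exact fun x => hdiag x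
  · exact fun x y z p hp => hP2' x y z p hp
  · exact fun x y _ _ => hP3' x y
  · exact fun x y => hP4' x y
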